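/- Let G be a graph with minimum degree δ(G) ≥ 2 whose vertex set is {a} ∪ N(a) ∪ {b₁, b₂, b₃}, where |N(a)| = 3, the vertices b₁, b₂, b₃ lie outside N[a], and {b₁, b₂, b₃} is an independent set. Then some two vertices of N(a) form a disjunctive dominating set of G, so γ₂ᵈ(G) ≤ 2. -/

import Mathlib

def IsDisjDomSet {V : Type*} (G : SimpleGraph V) (D : Set V) : Prop :=
  ∀ v : V, v ∉ D → (∃ u ∈ D, G.Adj v u) ∨
    (∃ u ∈ D, ∃ w ∈ D, u ≠ w ∧ G.dist v u = 2 ∧ G.dist v w = 2)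

noncomputable def disjDomNum {V : Type*} (G : SimpleGraph V) : ℕ :=
  sInf {n : ℕ | ∃ D : Set V, IsDisjDomSet G D ∧ D.ncard = n}

/-- If `v - a - c` is a path with `v ≠ c` and `v` not adjacent to `c`,
then `dist v c = 2`. -/
lemma dist_eq_two_aux {V : Type*} {G : SimpleGraph V} {v a c : V}
    (hva : G.Adj v a) (hac : G.Adj a c) (hne : v ≠ c) (hnadj : ¬ G.Adj v c) :
    G.dist v c = 2 := by
  have hle : G.dist v c ≤ 2 := by
    have := SimpleGraph.dist_le (SimpleGraph.Walk.cons hva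
      (SimpleGraph.Walk.cons hac SimpleGraph.Walk.nil))
    simpa using this
  have h0 : G.dist v c ≠ 0 := by
    rw [SimpleGraph.dist_ne_zero_iff_ne_and_reachable]
    exact ⟨hne, ⟨SimpleGraph.Walk.cons hva (SimpleGraph.Walk.cons hac SimpleGraph.Walk.nil)⟩⟩
  have h1 : G.dist v c ≠ 1 := fun h => hnadj (SimpleGraph.dist_eq_one_iff_adj.mp h)
  omega

/-- Let `G` be a graph with minimum degree at least `2` whose vertex set is
`{a} ∪ N(a) ∪ {b₁, b₂, b₃}`, where `|N(a)| = 3`, the vertices `b₁, b₂, b₃` lie outside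
the closed neighborhood `N[a]`, and `{b₁, b₂, b₃}` is an independent set.  Then some two
vertices of `N(a)` form a disjunctive dominating set of `G`, so `γ₂ᵈ(G) ≤ 2`. -/
theorem disjDomNum_le_two_of_three_outside {V : Type*} [Fintype V] (G : SimpleGraph V)
    (hdeg : ∀ v : V, 2 ≤ (G.neighborSet v).ncard)
    (a b₁ b₂ b₃ : V)
    (hN : (G.neighborSet a).ncard = 3)
    (huniv : (Set.univ : Set V) = insert a (G.neighborSet a) ∪ {b₁, b₂, b₃})
    (ho1 : b₁ ∉ insert a (G.neighborSet a))
    (ho2 : b₂ ∉ insert a (G.neighborSet a))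
    (ho3 : b₃ ∉ insert a (G.neighborSet a))
    (hd12 : b₁ ≠ b₂) (hd13 : b₁ ≠ b₃) (hd23 : b₂ ≠ b₃)
    (hi12 : ¬ G.Adj b₁ b₂) (hi13 : ¬ G.Adj b₁ b₃) (hi23 : ¬ G.Adj b₂ b₃) :
    (∃ c ∈ G.neighborSet a, ∃ d ∈ G.neighborSet a, c ≠ d ∧
      IsDisjDomSet G {c, d}) ∧ disjDomNum G ≤ 2 := by
  classical
  -- extract two distinct neighbors of a
  have hfin : (G.neighborSet a).Finite := Set.toFinite _
  have h2 : 1 < (G.neighborSet a).ncard := by omega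
  obtain ⟨c, hc, d, hd, hcd⟩ := (Set.one_lt_ncard hfin).mp h2
  -- neighbors of each bᵢ lie in N(a)
  have hbsub : ∀ b : V, b ∉ insert a (G.neighborSet a) → ¬ G.Adj b b₁ →
      ¬ G.Adj b b₂ → ¬ G.Adj b b₃ →
      G.neighborSet b ⊆ G.neighborSet a := by
    intro b hb h1 h2' h3 u hu
    have hu' : u ∈ (Set.univ : Set V) := Set.mem_univ u
    rw [huniv] at hu'
    have hadj : G.Adj b u := hu
    rcases hu' with hu' | hu'
    · rcases hu' with rfl | hu'
      · exact absurd (Set.mem_insert_iff.mpr (Or.inr hadj.symm)) hb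
      · exact hu'
    · exfalso
      rcases hu' with rfl | hu'
      · exact h1 hadj
      rcases hu' with rfl | rfl
      · exact h2' hadj
      · exact h3 hadj
  -- each bᵢ has a neighbor in {c, d}
  have hbdom : ∀ b : V, G.neighborSet b ⊆ G.neighborSet a →
      ∃ u ∈ ({c, d} : Set V), G.Adj b u := by
    intro b hsub
    by_contra h
    push_neg at h
    have hsub' : G.neighborSet b ⊆ G.neighborSet a \ {c, d} := by
      intro u hu
      refine ⟨hsub hu, ?_⟩
      intro hmem
      exact h u hmem hu
    have hle : (G.neighborSet b).ncard ≤ (G.neighborSet a \ {c, d}).ncard :=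
      Set.ncard_le_ncard hsub' hfin.diff
    have hsub2 : ({c, d} : Set V) ⊆ G.neighborSet a := by
      intro x hx
      rcases hx with rfl | hx
      · exact hc
      · rw [Set.mem_singleton_iff] at hx
        exact hx ▸ hd
    have hdiff : (G.neighborSet a \ ({c, d} : Set V)).ncard = 1 := by
      rw [Set.ncard_diff hsub2 (Set.toFinite _), hN, Set.ncard_pair hcd]
    have := hdeg b
    omega
  have hDD : IsDisjDomSet G {c, d} := by
    intro v hv
    have hvne : v ≠ c ∧ v ≠ d := by
      constructor <;> intro h <;> exact hv (by simp [h])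
    have hv' : v ∈ (Set.univ : Set V) := Set.mem_univ v
    rw [huniv] at hv'
    rcases hv' with hv' | hv'
    · rcases hv' with rfl | hv'
      · exact Or.inl ⟨c, by simp, hc⟩
      · -- v ∈ N(a)
        by_cases hvc : G.Adj v c
        · exact Or.inl ⟨c, by simp, hvc⟩
        by_cases hvd : G.Adj v d
        · exact Or.inl ⟨d, by simp, hvd⟩
        refine Or.inr ⟨c, by simp, d, by simp, hcd, ?_, ?_⟩
        · exact dist_eq_two_aux (G.adj_symm ((G.mem_neighborSet a v).mp hv')) hc hvne.1 hvc
        · exact dist_eq_two_aux (G.adj_symm ((G.mem_neighborSet a v).mp hv')) hd hvne.2 hvd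
    · have key : G.neighborSet v ⊆ G.neighborSet a := by
        rcases hv' with rfl | hv'
        · exact hbsub v ho1 G.irrefl hi12 hi13
        rcases hv' with rfl | rfl
        · exact hbsub v ho2 (fun h => hi12 h.symm) G.irrefl hi23
        · exact hbsub v ho3 (fun h => hi13 h.symm) (fun h => hi23 h.symm) G.irrefl
      exact Or.inl (hbdom v key)
  refine ⟨⟨c, hc, d, hd, hcd, hDD⟩, ?_⟩
  exact Nat.sInf_le ⟨{c, d}, hDD, Set.ncard_pair hcd⟩
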